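/- Let (X_n)_{n∈Z^d} be i.i.d. with all moments finite, and β, γ finitely supported multi-indices. Then lim_{L→∞} (2L+1)^{−d} Cov( Σ_{i∈Λ_L^d} X^{β^i}, Σ_{i∈Λ_L^d} X^{γ^i} ) = Σ_{j∈Z^d} Cov(X^β, X^{γ^j}), where Λ_L^d = ([−L,L]∩Z)^d and the right-hand sum is finite. -/

import Mathlib

open MeasureTheory ProbabilityTheory Filter

/-- The cube `Λ_L^d = ([-L,L] ∩ ℤ)^d` as a finset of `ℤ^d`. -/
noncomputable def cubeF (d L : ℕ) : Finset (Fin d → ℤ) :=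
  Fintype.piFinset fun _ : Fin d => Finset.Icc (-(L : ℤ)) (L : ℤ)

set_option linter.unusedSectionVars false
set_option linter.unusedVariables false


namespace CovAux

variable {d : ℕ} {Ω : Type*} [MeasurableSpace Ω]

/-- Shift a multi-index by `i`. -/
noncomputable def shiftF (i : Fin d → ℤ) (δ : (Fin d → ℤ) →₀ ℕ) : (Fin d → ℤ) →₀ ℕ :=
  δ.mapDomain (· + i)

lemma add_right_inj' (i : Fin d → ℤ) : Function.Injective (fun n : Fin d → ℤ => n + i) :=
  add_left_injective i

/-- The monomial `X^δ`. -/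
noncomputable def Xpow (X : (Fin d → ℤ) → Ω → ℝ) (δ : (Fin d → ℤ) →₀ ℕ) (ω : Ω) : ℝ :=
  δ.prod fun p k => X p ω ^ k

lemma Xpow_eq (X : (Fin d → ℤ) → Ω → ℝ) (δ : (Fin d → ℤ) →₀ ℕ) (ω : Ω) :
    Xpow X δ ω = ∏ n ∈ δ.support, X n ω ^ δ n := rfl

lemma Xpow_shift (X : (Fin d → ℤ) → Ω → ℝ) (i : Fin d → ℤ) (δ : (Fin d → ℤ) →₀ ℕ) (ω : Ω) :
    Xpow X (shiftF i δ) ω = ∏ n ∈ δ.support, X (n + i) ω ^ δ n := by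
  rw [Xpow, shiftF, Finsupp.prod_mapDomain_index_inj (add_right_inj' i)]; rfl

lemma Xpow_add (X : (Fin d → ℤ) → Ω → ℝ) (δ ε : (Fin d → ℤ) →₀ ℕ) (ω : Ω) :
    Xpow X (δ + ε) ω = Xpow X δ ω * Xpow X ε ω :=
  Finsupp.prod_add_index' (fun p => pow_zero _) (fun p k l => pow_add _ _ _)

lemma shiftF_shiftF (i k : Fin d → ℤ) (δ : (Fin d → ℤ) →₀ ℕ) :
    shiftF i (shiftF k δ) = shiftF (k + i) δ := by
  rw [shiftF, shiftF, shiftF, ← Finsupp.mapDomain_comp]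
  congr 1; funext n; simp [Function.comp, add_assoc]

lemma shiftF_add (i : Fin d → ℤ) (δ ε : (Fin d → ℤ) →₀ ℕ) :
    shiftF i (δ + ε) = shiftF i δ + shiftF i ε := Finsupp.mapDomain_add

variable (μ : Measure Ω) [IsProbabilityMeasure μ] (X : (Fin d → ℤ) → Ω → ℝ)

/-- `k`-th moment. -/
noncomputable def mo (k : ℕ) : ℝ := ∫ ω, X 0 ω ^ k ∂μ

/-- Expected value of the monomial `X^δ` expressed via moments. -/
noncomputable def Mn (δ : (Fin d → ℤ) →₀ ℕ) : ℝ := δ.prod fun _ k => mo μ X k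

lemma Mn_shift (i : Fin d → ℤ) (δ : (Fin d → ℤ) →₀ ℕ) :
    Mn μ X (shiftF i δ) = Mn μ X δ := by
  rw [Mn, shiftF, Finsupp.prod_mapDomain_index_inj (add_right_inj' i)]; rfl

variable {μ X}

lemma integrable_pow (hmeas : ∀ n, Measurable (X n))
    (hmom : ∀ n k, Integrable (fun ω => |X n ω| ^ k) μ) (p : Fin d → ℤ) (k : ℕ) :
    Integrable (fun ω => X p ω ^ k) μ := by
  refine (hmom p k).mono' ((hmeas p).pow_const k).aestronglyMeasurable ?_
  filter_upwards with ω
  rw [Real.norm_eq_abs, abs_pow]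

lemma integral_pow (hmeas : ∀ n, Measurable (X n))
    (hid : ∀ n m, μ.map (X n) = μ.map (X m)) (p : Fin d → ℤ) (k : ℕ) :
    ∫ ω, X p ω ^ k ∂μ = mo μ X k := by
  have h1 : ∫ ω, X p ω ^ k ∂μ = ∫ x, x ^ k ∂(μ.map (X p)) :=
    (integral_map (hmeas p).aemeasurable
      (measurable_id.pow_const k).aestronglyMeasurable).symm
  rw [h1, hid p 0, mo]
  exact integral_map (hmeas 0).aemeasurable (measurable_id.pow_const k).aestronglyMeasurable

lemma key (hmeas : ∀ n, Measurable (X n))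
    (hindep : iIndepFun X μ)
    (hid : ∀ n m, μ.map (X n) = μ.map (X m))
    (hmom : ∀ n k, Integrable (fun ω => |X n ω| ^ k) μ)
    (s : Finset (Fin d → ℤ)) (e : (Fin d → ℤ) → ℕ) :
    Integrable (fun ω => ∏ p ∈ s, X p ω ^ e p) μ ∧
      ∫ ω, ∏ p ∈ s, X p ω ^ e p ∂μ = ∏ p ∈ s, mo μ X (e p) := by
  classical
  induction s using Finset.induction_on with
  | empty => simp
  | @insert a s ha ih =>
    set Y : (Fin d → ℤ) → Ω → ℝ := fun p ω => X p ω ^ e p with hY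
    have hYmeas : ∀ p, Measurable (Y p) := fun p => (hmeas p).pow_const (e p)
    have hYindep : iIndepFun Y μ :=
      hindep.comp (fun p x => x ^ e p) (fun p => measurable_id.pow_const (e p))
    have hIF : IndepFun (∏ p ∈ s, Y p) (Y a) μ :=
      hYindep.indepFun_finsetProd_of_notMem hYmeas ha
    have hprodeq : (∏ p ∈ s, Y p) = fun ω => ∏ p ∈ s, X p ω ^ e p := by
      funext ω; simp [hY, Finset.prod_apply]
    have hInt : Integrable (∏ p ∈ s, Y p) μ := by rw [hprodeq]; exact ih.1
    have hIntA : Integrable (Y a) μ := integrable_pow hmeas hmom a (e a)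
    have hfun : (fun ω => ∏ p ∈ insert a s, X p ω ^ e p) = (∏ p ∈ s, Y p) * Y a := by
      funext ω
      simp [Finset.prod_insert ha, hY, Finset.prod_apply, mul_comm]
    constructor
    · rw [hfun]; exact hIF.integrable_mul hInt hIntA
    · rw [hfun, hIF.integral_mul_eq_mul_integral hInt.aestronglyMeasurable hIntA.aestronglyMeasurable]
      rw [hprodeq, ih.2, Finset.prod_insert ha, integral_pow hmeas hid a (e a)]
      ring

lemma Xpow_integral (hmeas : ∀ n, Measurable (X n))
    (hindep : iIndepFun X μ)
    (hid : ∀ n m, μ.map (X n) = μ.map (X m))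
    (hmom : ∀ n k, Integrable (fun ω => |X n ω| ^ k) μ)
    (δ : (Fin d → ℤ) →₀ ℕ) :
    Integrable (fun ω => Xpow X δ ω) μ ∧ ∫ ω, Xpow X δ ω ∂μ = Mn μ X δ :=
  key hmeas hindep hid hmom δ.support δ


lemma card_Icc_filter (L : ℕ) (a : ℤ) :
    ((Finset.Icc (-(L:ℤ)) L).filter (fun x => x + a ∈ Finset.Icc (-(L:ℤ)) L)).card
      = (2*(L:ℤ)+1 - |a|).toNat := by
  have h : (Finset.Icc (-(L:ℤ)) L).filter (fun x => x + a ∈ Finset.Icc (-(L:ℤ)) L)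
      = Finset.Icc (max (-(L:ℤ)) (-(L:ℤ) - a)) (min (L:ℤ) ((L:ℤ) - a)) := by
    ext x; simp only [Finset.mem_filter, Finset.mem_Icc, max_le_iff, le_min_iff]
    omega
  rw [h, Int.card_Icc]
  rcases le_total 0 a with h'|h'
  · rw [abs_of_nonneg h', max_eq_left (by omega), min_eq_right (by omega)]
    congr 1; ring
  · rw [abs_of_nonpos h', max_eq_right (by omega), min_eq_left (by omega)]
    congr 1; ring

lemma card_cube_filter (d L : ℕ) (j : Fin d → ℤ) :
    ((cubeF d L).filter (fun i => i + j ∈ cubeF d L)).card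
      = ∏ k : Fin d, (2*(L:ℤ)+1 - |j k|).toNat := by
  classical
  have h : (cubeF d L).filter (fun i => i + j ∈ cubeF d L)
      = Fintype.piFinset (fun k =>
          (Finset.Icc (-(L:ℤ)) L).filter (fun x => x + j k ∈ Finset.Icc (-(L:ℤ)) L)) := by
    ext i
    simp only [cubeF, Finset.mem_filter, Fintype.mem_piFinset, Pi.add_apply]
    constructor
    · rintro ⟨h1, h2⟩ k; exact ⟨h1 k, h2 k⟩
    · intro h; exact ⟨fun k => (h k).1, fun k => (h k).2⟩
  rw [h, Fintype.card_piFinset]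
  exact Finset.prod_congr rfl fun k _ => card_Icc_filter L (j k)

lemma ratio_tendsto (a : ℤ) :
    Tendsto (fun L : ℕ => (((2*(L:ℤ)+1 - |a|).toNat : ℝ)) / (2*(L:ℝ)+1)) atTop (nhds 1) := by
  have h0 : Tendsto (fun L : ℕ => (2*(L:ℝ)+1)) atTop atTop := by
    apply tendsto_atTop_add_const_right
    exact (tendsto_natCast_atTop_atTop).const_mul_atTop (by norm_num)
  have h1 : Tendsto (fun L : ℕ => ((|a| : ℤ) : ℝ) / (2*(L:ℝ)+1)) atTop (nhds 0) :=
    tendsto_const_nhds.div_atTop h0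
  have h2 := tendsto_const_nhds (x := (1:ℝ)) (f := atTop (α := ℕ)) |>.sub h1
  rw [sub_zero] at h2
  refine h2.congr' ?_
  filter_upwards [eventually_ge_atTop (|a|.toNat)] with L hL
  have hab : |a| ≤ (L:ℤ) := Int.toNat_le.mp hL
  have habs : (0:ℤ) ≤ |a| := abs_nonneg a
  have hpos : (0:ℝ) < 2*(L:ℝ)+1 := by positivity
  have hcast : (((2*(L:ℤ)+1 - |a|).toNat : ℤ) : ℝ) = 2*(L:ℝ)+1 - ((|a|:ℤ):ℝ) := by
    rw [Int.toNat_of_nonneg (by omega)]; push_cast; ring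
  rw [Int.cast_natCast] at hcast
  rw [hcast]
  field_simp

end CovAux

theorem cov_sums_tendsto {d : ℕ} {Ω : Type*} [MeasurableSpace Ω]
    (μ : Measure Ω) [IsProbabilityMeasure μ]
    (X : (Fin d → ℤ) → Ω → ℝ) (hmeas : ∀ n, Measurable (X n))
    (hindep : iIndepFun X μ)
    (hid : ∀ n m, μ.map (X n) = μ.map (X m))
    (hmom : ∀ n k, Integrable (fun ω => |X n ω| ^ k) μ)
    (β γ : (Fin d → ℤ) →₀ ℕ) :
    Tendsto (fun L : ℕ =>
      ((∫ ω, (∑ i ∈ cubeF d L, ∏ n ∈ β.support, X (n + i) ω ^ β n) *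
            (∑ i ∈ cubeF d L, ∏ n ∈ γ.support, X (n + i) ω ^ γ n) ∂μ) -
        (∫ ω, ∑ i ∈ cubeF d L, ∏ n ∈ β.support, X (n + i) ω ^ β n ∂μ) *
          (∫ ω, ∑ i ∈ cubeF d L, ∏ n ∈ γ.support, X (n + i) ω ^ γ n ∂μ)) /
        (2 * (L : ℝ) + 1) ^ d)
      atTop
      (nhds (∑' j : Fin d → ℤ,
        ((∫ ω, (∏ n ∈ β.support, X n ω ^ β n) * (∏ n ∈ γ.support, X (n + j) ω ^ γ n) ∂μ) -
          (∫ ω, ∏ n ∈ β.support, X n ω ^ β n ∂μ) *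
            (∫ ω, ∏ n ∈ γ.support, X (n + j) ω ^ γ n ∂μ)))) := by
  classical
  have hXI := fun δ => CovAux.Xpow_integral (μ := μ) (X := X) hmeas hindep hid hmom δ
  have hint1 : ∀ δ, Integrable (fun ω => CovAux.Xpow X δ ω) μ := fun δ => (hXI δ).1
  have hXint2 : ∀ δ, ∫ ω, CovAux.Xpow X δ ω ∂μ = CovAux.Mn μ X δ := fun δ => (hXI δ).2
  set c : (Fin d → ℤ) → ℝ := fun j =>
    CovAux.Mn μ X (β + CovAux.shiftF j γ) - CovAux.Mn μ X β * CovAux.Mn μ X γ with hc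
  set S : Finset (Fin d → ℤ) :=
    Finset.image (fun p : (Fin d → ℤ) × (Fin d → ℤ) => p.1 - p.2) (β.support ×ˢ γ.support)
    with hS
  -- c vanishes off S
  have hc0 : ∀ j, j ∉ S → c j = 0 := by
    intro j hj
    have hdisj : Disjoint β.support (CovAux.shiftF j γ).support := by
      rw [CovAux.shiftF, Finsupp.mapDomain_support_of_injective (CovAux.add_right_inj' j)]
      rw [Finset.disjoint_left]
      intro n hn hn'
      rcases Finset.mem_image.mp hn' with ⟨m, hm, rfl⟩
      exact hj (Finset.mem_image.mpr ⟨(m + j, m), Finset.mem_product.mpr ⟨hn, hm⟩, by simp⟩)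
    have hsplit : CovAux.Mn μ X (β + CovAux.shiftF j γ)
        = CovAux.Mn μ X β * CovAux.Mn μ X (CovAux.shiftF j γ) :=
      Finsupp.prod_add_index_of_disjoint hdisj _
    simp only [hc]
    rw [hsplit, CovAux.Mn_shift]
    ring
  -- the terms of the tsum equal c
  have hterm : ∀ j : Fin d → ℤ,
      ((∫ ω, (∏ n ∈ β.support, X n ω ^ β n) * (∏ n ∈ γ.support, X (n + j) ω ^ γ n) ∂μ) -
        (∫ ω, ∏ n ∈ β.support, X n ω ^ β n ∂μ) *
          (∫ ω, ∏ n ∈ γ.support, X (n + j) ω ^ γ n ∂μ)) = c j := by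
    intro j
    have e1 : ∀ ω, (∏ n ∈ β.support, X n ω ^ β n) = CovAux.Xpow X β ω :=
      fun ω => (CovAux.Xpow_eq X β ω).symm
    have e2 : ∀ ω, (∏ n ∈ γ.support, X (n + j) ω ^ γ n)
        = CovAux.Xpow X (CovAux.shiftF j γ) ω := fun ω => (CovAux.Xpow_shift X j γ ω).symm
    simp only [hc]
    simp only [e1, e2, ← CovAux.Xpow_add]
    rw [hXint2, hXint2, hXint2, CovAux.Mn_shift]
  have htsum : (∑' j : Fin d → ℤ,
      ((∫ ω, (∏ n ∈ β.support, X n ω ^ β n) * (∏ n ∈ γ.support, X (n + j) ω ^ γ n) ∂μ) -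
        (∫ ω, ∏ n ∈ β.support, X n ω ^ β n ∂μ) *
          (∫ ω, ∏ n ∈ γ.support, X (n + j) ω ^ γ n ∂μ))) = ∑ j ∈ S, c j := by
    rw [tsum_congr hterm]
    exact tsum_eq_sum (fun b hb => hc0 b hb)
  -- expansion of the product integral
  have expand : ∀ L : ℕ,
      ∫ ω, (∑ i ∈ cubeF d L, CovAux.Xpow X (CovAux.shiftF i β) ω) *
          (∑ i ∈ cubeF d L, CovAux.Xpow X (CovAux.shiftF i γ) ω) ∂μ
        = ∑ i ∈ cubeF d L, ∑ i' ∈ cubeF d L,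
            CovAux.Mn μ X (CovAux.shiftF i β + CovAux.shiftF i' γ) := by
    intro L
    have hpw : ∀ ω, (∑ i ∈ cubeF d L, CovAux.Xpow X (CovAux.shiftF i β) ω) *
        (∑ i ∈ cubeF d L, CovAux.Xpow X (CovAux.shiftF i γ) ω)
        = ∑ i ∈ cubeF d L, ∑ i' ∈ cubeF d L,
            CovAux.Xpow X (CovAux.shiftF i β + CovAux.shiftF i' γ) ω := by
      intro ω
      rw [Finset.sum_mul_sum]
      simp_rw [CovAux.Xpow_add]
    simp_rw [hpw]
    rw [integral_finset_sum _ fun i _ => integrable_finset_sum _ fun i' _ => hint1 _]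
    refine Finset.sum_congr rfl fun i _ => ?_
    rw [integral_finset_sum _ fun i' _ => hint1 _]
    exact Finset.sum_congr rfl fun i' _ => hXint2 _
  have hcc : ∀ i i' : Fin d → ℤ,
      CovAux.Mn μ X (CovAux.shiftF i β + CovAux.shiftF i' γ)
        - CovAux.Mn μ X (CovAux.shiftF i β) * CovAux.Mn μ X (CovAux.shiftF i' γ)
        = c (i' - i) := by
    intro i i'
    have h1 : CovAux.shiftF i β + CovAux.shiftF i' γ
        = CovAux.shiftF i (β + CovAux.shiftF (i' - i) γ) := by
      rw [CovAux.shiftF_add, CovAux.shiftF_shiftF, sub_add_cancel]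
    rw [h1, CovAux.Mn_shift, CovAux.Mn_shift, CovAux.Mn_shift]
  have hpt : ∀ i i' : Fin d → ℤ, c (i' - i) = ∑ j ∈ S, if i' = i + j then c j else 0 := by
    intro i i'
    have hiff : ∀ j : Fin d → ℤ, (i' = i + j) ↔ (i' - i = j) := fun j => by
      rw [sub_eq_iff_eq_add']
    simp only [hiff]
    rw [Finset.sum_ite_eq]
    by_cases h : i' - i ∈ S
    · rw [if_pos h]
    · rw [if_neg h, hc0 _ h]
  have hcomb : ∀ L : ℕ, (∑ i ∈ cubeF d L, ∑ i' ∈ cubeF d L, c (i' - i))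
      = ∑ j ∈ S, (((cubeF d L).filter (fun i => i + j ∈ cubeF d L)).card : ℝ) * c j := by
    intro L
    calc (∑ i ∈ cubeF d L, ∑ i' ∈ cubeF d L, c (i' - i))
        = ∑ i ∈ cubeF d L, ∑ i' ∈ cubeF d L, ∑ j ∈ S, if i' = i + j then c j else 0 := by
          simp_rw [hpt]
      _ = ∑ i ∈ cubeF d L, ∑ j ∈ S, ∑ i' ∈ cubeF d L, if i' = i + j then c j else 0 :=
          Finset.sum_congr rfl fun i _ => Finset.sum_comm
      _ = ∑ i ∈ cubeF d L, ∑ j ∈ S, if i + j ∈ cubeF d L then c j else 0 := by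
          refine Finset.sum_congr rfl fun i _ => Finset.sum_congr rfl fun j _ => ?_
          exact Finset.sum_ite_eq' (cubeF d L) (i + j) (fun _ => c j)
      _ = ∑ j ∈ S, ∑ i ∈ cubeF d L, if i + j ∈ cubeF d L then c j else 0 := Finset.sum_comm
      _ = ∑ j ∈ S, (((cubeF d L).filter (fun i => i + j ∈ cubeF d L)).card : ℝ) * c j := by
          refine Finset.sum_congr rfl fun j _ => ?_
          rw [← Finset.sum_filter, Finset.sum_const, nsmul_eq_mul]
  have hnum : ∀ L : ℕ,
      ((∫ ω, (∑ i ∈ cubeF d L, ∏ n ∈ β.support, X (n + i) ω ^ β n) *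
            (∑ i ∈ cubeF d L, ∏ n ∈ γ.support, X (n + i) ω ^ γ n) ∂μ) -
        (∫ ω, ∑ i ∈ cubeF d L, ∏ n ∈ β.support, X (n + i) ω ^ β n ∂μ) *
          (∫ ω, ∑ i ∈ cubeF d L, ∏ n ∈ γ.support, X (n + i) ω ^ γ n ∂μ))
      = ∑ j ∈ S, (((cubeF d L).filter (fun i => i + j ∈ cubeF d L)).card : ℝ) * c j := by
    intro L
    simp only [← CovAux.Xpow_shift]
    rw [expand L]
    rw [integral_finset_sum _ fun i _ => hint1 _, integral_finset_sum _ fun i _ => hint1 _]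
    simp_rw [hXint2]
    rw [Finset.sum_mul_sum, ← Finset.sum_sub_distrib]
    simp_rw [← Finset.sum_sub_distrib, hcc]
    exact hcomb L
  rw [htsum]
  have heq : ∀ L : ℕ,
      ((∫ ω, (∑ i ∈ cubeF d L, ∏ n ∈ β.support, X (n + i) ω ^ β n) *
            (∑ i ∈ cubeF d L, ∏ n ∈ γ.support, X (n + i) ω ^ γ n) ∂μ) -
        (∫ ω, ∑ i ∈ cubeF d L, ∏ n ∈ β.support, X (n + i) ω ^ β n ∂μ) *
          (∫ ω, ∑ i ∈ cubeF d L, ∏ n ∈ γ.support, X (n + i) ω ^ γ n ∂μ)) /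
        (2 * (L : ℝ) + 1) ^ d
      = ∑ j ∈ S, ((((cubeF d L).filter (fun i => i + j ∈ cubeF d L)).card : ℝ)
            / (2 * (L : ℝ) + 1) ^ d) * c j := by
    intro L
    rw [hnum L, Finset.sum_div]
    exact Finset.sum_congr rfl fun j _ => by ring
  refine Tendsto.congr (fun L => (heq L).symm) ?_
  have hgoal : (∑ j ∈ S, c j) = ∑ j ∈ S, (1 : ℝ) * c j := by simp
  rw [hgoal]
  refine tendsto_finset_sum _ fun j _ => Tendsto.mul_const _ ?_
  have hcard : ∀ L : ℕ, (((cubeF d L).filter (fun i => i + j ∈ cubeF d L)).card : ℝ)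
      = ∏ k : Fin d, (((2*(L:ℤ)+1 - |j k|).toNat : ℝ)) := by
    intro L; rw [CovAux.card_cube_filter]; push_cast; ring
  have h1 : Tendsto (fun L : ℕ =>
      ∏ k : Fin d, (((2*(L:ℤ)+1 - |j k|).toNat : ℝ)) / (2*(L:ℝ)+1)) atTop
      (nhds (∏ _k : Fin d, (1:ℝ))) :=
    tendsto_finset_prod _ fun k _ => CovAux.ratio_tendsto (j k)
  rw [Finset.prod_const_one] at h1
  refine h1.congr fun L => ?_
  rw [Finset.prod_div_distrib, ← hcard L, Finset.prod_const, Finset.card_univ, Fintype.card_fin]
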